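/- (Fredholm solvability condition.) Let U₀ solve U₀'' = f(U₀) with U₀(-∞)=u_a, U₀(+∞)=u_b, U₀'(±∞)=0, U₀' ∈ L²(ℝ). If U₁ : ℝ → ℝ is smooth with bounded derivatives such that W₀ = -U₁'' + κ·U₀' + f'(U₀)U₁ holds on ℝ for constants W₀, κ ∈ ℝ, and U₁'(z)U₀'(z), U₁(z)U₀''(z) → 0 as |z| → ∞, then W₀·(u_b - u_a) = κ·∫_ℝ (U₀')² dz, i.e. W₀ = S·κ with S = (∫_ℝ(U₀')²)/(u_b-u_a). -/

import Mathlib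

open Filter MeasureTheory

theorem stmt7 (u_a u_b W₀ κ : ℝ) (hab : u_a < u_b)
    (f : ℝ → ℝ) (hf : ContDiff ℝ 1 f)
    (U₀ : ℝ → ℝ) (hU₀reg : ContDiff ℝ 2 U₀)
    (hU₀eq : ∀ z : ℝ, deriv (deriv U₀) z = f (U₀ z))
    (hbot : Tendsto U₀ atBot (nhds u_a)) (htop : Tendsto U₀ atTop (nhds u_b))
    (hdbot : Tendsto (deriv U₀) atBot (nhds 0))
    (hdtop : Tendsto (deriv U₀) atTop (nhds 0))
    (hL2 : Integrable (fun z => (deriv U₀ z)^2))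
    (U₁ : ℝ → ℝ) (hU₁reg : ContDiff ℝ 2 U₁)
    (heq : ∀ z : ℝ, W₀ = -(deriv (deriv U₁) z) + κ * deriv U₀ z + deriv f (U₀ z) * U₁ z)
    (hdec1top : Tendsto (fun z => deriv U₁ z * deriv U₀ z) atTop (nhds 0))
    (hdec1bot : Tendsto (fun z => deriv U₁ z * deriv U₀ z) atBot (nhds 0))
    (hdec2top : Tendsto (fun z => U₁ z * deriv (deriv U₀) z) atTop (nhds 0))
    (hdec2bot : Tendsto (fun z => U₁ z * deriv (deriv U₀) z) atBot (nhds 0)) :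
    W₀ * (u_b - u_a) = κ * ∫ z : ℝ, (deriv U₀ z)^2 := by
  -- G(z) = W₀ U₀ - (U₁ U₀'' - U₁' U₀') has derivative κ (U₀')²
  set G : ℝ → ℝ := fun z => W₀ * U₀ z - U₁ z * deriv (deriv U₀) z + deriv U₁ z * deriv U₀ z
    with hGdef
  have hU₀d : Differentiable ℝ U₀ := hU₀reg.differentiable two_ne_zero
  have hU₀d' : Differentiable ℝ (deriv U₀) := (hU₀reg.iterate_deriv' 1 1).differentiable one_ne_zero
  have hU₁d : Differentiable ℝ U₁ := hU₁reg.differentiable two_ne_zero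
  have hU₁d' : Differentiable ℝ (deriv U₁) := (hU₁reg.iterate_deriv' 1 1).differentiable one_ne_zero
  have hfd : Differentiable ℝ f := hf.differentiable one_ne_zero
  have hdd : (fun z => deriv (deriv U₀) z) = fun z => f (U₀ z) := funext hU₀eq
  have hG : ∀ z : ℝ, HasDerivAt G (κ * (deriv U₀ z)^2) z := by
    intro z
    have h3 : HasDerivAt (deriv (deriv U₀)) (deriv f (U₀ z) * deriv U₀ z) z := by
      rw [show deriv (deriv U₀) = fun z => f (U₀ z) from hdd]
      exact ((hfd (U₀ z)).hasDerivAt).comp z (hU₀d z).hasDerivAt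
    have h := ((((hU₀d z).hasDerivAt.const_mul W₀).sub
        (((hU₁d z).hasDerivAt).mul h3)).add
        (((hU₁d' z).hasDerivAt).mul (hU₀d' z).hasDerivAt))
    refine h.congr_deriv ?_
    have := heq z
    linear_combination (deriv U₀ z) * this
  have hGtop : Tendsto G atTop (nhds (W₀ * u_b)) := by
    have : Tendsto G atTop (nhds (W₀ * u_b - 0 + 0)) :=
      ((htop.const_mul W₀).sub hdec2top).add hdec1top
    simpa using this
  have hGbot : Tendsto G atBot (nhds (W₀ * u_a)) := by
    have : Tendsto G atBot (nhds (W₀ * u_a - 0 + 0)) :=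
      ((hbot.const_mul W₀).sub hdec2bot).add hdec1bot
    simpa using this
  have hint : Integrable (fun z => κ * (deriv U₀ z)^2) := hL2.const_mul κ
  have key := integral_of_hasDerivAt_of_tendsto hG hint hGbot hGtop
  rw [integral_const_mul] at key
  linarith [key]
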